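/- Let r₁, r₂, c > 0 with r₁² + r₂² = 1. Suppose f(u₁) = a₁cosh(r₂√c u₁) + a₂sinh(r₂√c u₁) and g(u₂) = b₁cosh(r₁√c u₂) + b₂sinh(r₁√c u₂), and set Ω = r₁r₂(f+g), W = r₂²f − r₁²g. If the identity (f'(u₁))² + (g'(u₂))² = c(Ω² + W²) holds for all (u₁,u₂) ∈ ℝ², then (a₁² − a₂²)r₂² = (b₂² − b₁²)r₁². -/

import Mathlib

open Real

lemma deriv_at_zero (k c1 c2 : ℝ) :
    deriv (fun u => c1 * Real.cosh (k * u) + c2 * Real.sinh (k * u)) 0 = c2 * k := by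
  have hk : HasDerivAt (fun u : ℝ => k * u) k 0 := by
    simpa using (hasDerivAt_id (0:ℝ)).const_mul k
  have h1 := ((hk.cosh).const_mul c1).add ((hk.sinh).const_mul c2)
  have := h1.deriv
  simp at this
  exact this

theorem stmt_7 (r1 r2 c : ℝ) (hr1 : 0 < r1) (hr2 : 0 < r2) (hc : 0 < c)
    (h : r1 ^ 2 + r2 ^ 2 = 1)
    (a1 a2 b1 b2 : ℝ)
    (f g : ℝ → ℝ) (Ω W : ℝ → ℝ → ℝ)
    (hf : ∀ u1, f u1 = a1 * Real.cosh (r2 * Real.sqrt c * u1) +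
        a2 * Real.sinh (r2 * Real.sqrt c * u1))
    (hg : ∀ u2, g u2 = b1 * Real.cosh (r1 * Real.sqrt c * u2) +
        b2 * Real.sinh (r1 * Real.sqrt c * u2))
    (hΩ : ∀ u1 u2, Ω u1 u2 = r1 * r2 * (f u1 + g u2))
    (hW : ∀ u1 u2, W u1 u2 = r2 ^ 2 * f u1 - r1 ^ 2 * g u2)
    (hid : ∀ u1 u2 : ℝ,
      (deriv f u1) ^ 2 + (deriv g u2) ^ 2 = c * ((Ω u1 u2) ^ 2 + (W u1 u2) ^ 2)) :
    (a1 ^ 2 - a2 ^ 2) * r2 ^ 2 = (b2 ^ 2 - b1 ^ 2) * r1 ^ 2 := by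
  have hfe : f = fun u => a1 * Real.cosh (r2 * Real.sqrt c * u) +
      a2 * Real.sinh (r2 * Real.sqrt c * u) := funext hf
  have hge : g = fun u => b1 * Real.cosh (r1 * Real.sqrt c * u) +
      b2 * Real.sinh (r1 * Real.sqrt c * u) := funext hg
  have hdf : deriv f 0 = a2 * (r2 * Real.sqrt c) := by
    rw [hfe]; exact deriv_at_zero _ _ _
  have hdg : deriv g 0 = b2 * (r1 * Real.sqrt c) := by
    rw [hge]; exact deriv_at_zero _ _ _
  have hf0 : f 0 = a1 := by rw [hf]; simp
  have hg0 : g 0 = b1 := by rw [hg]; simp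
  have hsq : Real.sqrt c ^ 2 = c := Real.sq_sqrt hc.le
  have hid0 := hid 0 0
  rw [hdf, hdg, hΩ, hW, hf0, hg0] at hid0
  have hcne : c ≠ 0 := hc.ne'
  have hid1 : a2^2*r2^2*c + b2^2*r1^2*c =
      c*((r1*r2*(a1+b1))^2 + (r2^2*a1 - r1^2*b1)^2) := by
    linear_combination hid0 - (a2^2*r2^2 + b2^2*r1^2)*hsq
  have key : c * (a2^2*r2^2 + b2^2*r1^2) = c * (a1^2*r2^2 + b1^2*r1^2) := by
    linear_combination hid1 + c*(a1^2*r2^2 + b1^2*r1^2)*h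
  have key2 := mul_left_cancel₀ hcne key
  linarith
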